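/- arXiv:2107.01975 — 11 statements merged into one kernel-verified Lean document; each statement's English description precedes it below -/
import Mathlib

section
/- For a stochastic map f : (X,p) → (Y,q) between finite probability spaces, the conditional information loss satisfies K(f) = −Σ_{x : p_x > 0} Σ_{y : f_{yx} > 0} f_{yx} p_x log(f_{yx} p_x / q_y). -/
open Real BigOperators
open scoped Classical

noncomputable def entropy {X : Type*} [Fintype X] (p : X → ℝ) : ℝ :=
  ∑ x, Real.negMulLog (p x)

def IsDist {X : Type*} [Fintype X] (p : X → ℝ) : Prop :=
  (∀ x, 0 ≤ p x) ∧ ∑ x, p x = 1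

lemma key_term (a b c : ℝ) (ha : 0 ≤ a) (hb : 0 ≤ b) (hab : a * b ≤ c) :
    a * Real.negMulLog b + b * Real.negMulLog a + a * b * Real.log c
      = -(a * b * Real.log (a * b / c)) := by
  rcases ha.eq_or_lt with h | ha'
  · simp [← h, Real.negMulLog]
  rcases hb.eq_or_lt with h | hb'
  · simp [← h, Real.negMulLog]
  have habpos : 0 < a * b := mul_pos ha' hb'
  have hc : 0 < c := lt_of_lt_of_le habpos hab
  rw [Real.log_div habpos.ne' hc.ne', Real.log_mul ha'.ne' hb'.ne']
  simp [Real.negMulLog]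
  ring

theorem conditional_information_loss_formula
    {X Y : Type*} [Fintype X] [Fintype Y]
    (p : X → ℝ) (f : X → Y → ℝ) (q : Y → ℝ)
    (hp : IsDist p) (hf : ∀ x, IsDist (f x))
    (hq : ∀ y, q y = ∑ x, f x y * p x) :
    entropy p - entropy q + ∑ x, p x * entropy (f x) =
      -∑ x ∈ Finset.univ.filter (fun x => 0 < p x),
        ∑ y ∈ Finset.univ.filter (fun y => 0 < f x y),
          f x y * p x * Real.log (f x y * p x / q y) := by
  have hpnn := hp.1
  have hfnn : ∀ x y, 0 ≤ f x y := fun x => (hf x).1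
  -- remove the filters
  have hinner : ∀ x, ∑ y ∈ Finset.univ.filter (fun y => 0 < f x y),
      f x y * p x * Real.log (f x y * p x / q y)
      = ∑ y, f x y * p x * Real.log (f x y * p x / q y) := by
    intro x
    refine Finset.sum_subset (Finset.subset_univ _) ?_
    intro y _ hy
    have : f x y = 0 := le_antisymm (by simpa using hy) (hfnn x y)
    simp [this]
  have houter : ∑ x ∈ Finset.univ.filter (fun x => 0 < p x),
      ∑ y ∈ Finset.univ.filter (fun y => 0 < f x y),
        f x y * p x * Real.log (f x y * p x / q y)
      = ∑ x, ∑ y, f x y * p x * Real.log (f x y * p x / q y) := by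
    rw [Finset.sum_congr rfl (fun x _ => hinner x)]
    refine Finset.sum_subset (Finset.subset_univ _) ?_
    intro x _ hx
    have : p x = 0 := le_antisymm (by simpa using hx) (hpnn x)
    simp [this]
  rw [houter]
  -- expand entropies into double sums
  have h1 : entropy p = ∑ x, ∑ y, f x y * Real.negMulLog (p x) := by
    unfold entropy
    refine Finset.sum_congr rfl fun x _ => ?_
    rw [← Finset.sum_mul, (hf x).2, one_mul]
  have h2 : (∑ x, p x * entropy (f x)) = ∑ x, ∑ y, p x * Real.negMulLog (f x y) := by
    refine Finset.sum_congr rfl fun x _ => ?_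
    unfold entropy
    rw [Finset.mul_sum]
  have h3 : entropy q = ∑ x, ∑ y, -(f x y * p x * Real.log (q y)) := by
    unfold entropy
    rw [Finset.sum_comm]
    refine Finset.sum_congr rfl fun y _ => ?_
    rw [Real.negMulLog, hq y, neg_mul, Finset.sum_mul, ← Finset.sum_neg_distrib]
  calc entropy p - entropy q + ∑ x, p x * entropy (f x)
      = ∑ x, ∑ y, (f x y * Real.negMulLog (p x) + p x * Real.negMulLog (f x y)
          + f x y * p x * Real.log (q y)) := by
        rw [h1, h2, h3, ← Finset.sum_sub_distrib, ← Finset.sum_add_distrib]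
        refine Finset.sum_congr rfl fun x _ => ?_
        rw [← Finset.sum_sub_distrib, ← Finset.sum_add_distrib]
        refine Finset.sum_congr rfl fun y _ => ?_
        ring
    _ = ∑ x, ∑ y, -(f x y * p x * Real.log (f x y * p x / q y)) := by
        refine Finset.sum_congr rfl fun x _ => ?_
        refine Finset.sum_congr rfl fun y _ => ?_
        have hab : f x y * p x ≤ q y := by
          rw [hq y]
          exact Finset.single_le_sum (fun x' _ => mul_nonneg (hfnn x' y) (hpnn x'))
            (Finset.mem_univ x)
        exact key_term (f x y) (p x) (q y) (hfnn x y) (hpnn x) hab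
    _ = -∑ x, ∑ y, f x y * p x * Real.log (f x y * p x / q y) := by
        simp [Finset.sum_neg_distrib]
end

section
/- Let F be a functor from the category FinPS of finite probability spaces and measure-preserving stochastic maps to the additive monoid of non-negative reals (F sends composition to addition and identities to 0). Then F(f) = 0 for every morphism f. -/
open Real BigOperators
open scoped Classical

structure FinPS where
  carrier : Type
  [fin : Fintype carrier]
  p : carrier → ℝ
  nonneg : ∀ x, 0 ≤ p x
  sum_one : ∑ x, p x = 1

attribute [instance] FinPS.fin

structure FinPSHom (A B : FinPS) where
  m : A.carrier → B.carrier → ℝ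
  nonneg : ∀ x y, 0 ≤ m x y
  rowsum : ∀ x, ∑ y, m x y = 1
  push : ∀ y, ∑ x, m x y * A.p x = B.p y

def PtSpace : FinPS :=
  { carrier := PUnit, p := fun _ => 1, nonneg := fun _ => zero_le_one,
    sum_one := by simp }

theorem PtSpace_card : (Finset.univ : Finset PtSpace.carrier).card = 1 := rfl

def fromPt (A : FinPS) : FinPSHom PtSpace A :=
  { m := fun _ y => A.p y
    nonneg := fun _ y => A.nonneg y
    rowsum := fun _ => A.sum_one
    push := fun y => by
      simp [PtSpace]
      exact (congrArg (fun n : ℕ => (n : ℝ) * A.p y) PtSpace_card).trans (by simp) }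

def toPt (A : FinPS) : FinPSHom A PtSpace :=
  { m := fun _ _ => 1
    nonneg := fun _ _ => zero_le_one
    rowsum := fun x => by simp [PtSpace]; rfl
    push := fun y => by simp [PtSpace, A.sum_one] }

def idPt : FinPSHom PtSpace PtSpace :=
  { m := fun _ _ => 1
    nonneg := fun _ _ => zero_le_one
    rowsum := fun x => by simp [PtSpace]; rfl
    push := fun y => by simp [PtSpace]; rfl }

theorem functor_to_nonneg_reals_vanishes
    (F : ∀ A B : FinPS, FinPSHom A B → ℝ)
    (Fnonneg : ∀ (A B : FinPS) (f : FinPSHom A B), 0 ≤ F A B f)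
    (Fid : ∀ (A : FinPS) (i : FinPSHom A A),
      (∀ x x', i.m x x' = if x = x' then 1 else 0) → F A A i = 0)
    (Fcomp : ∀ (A B C : FinPS) (f : FinPSHom A B) (g : FinPSHom B C) (h : FinPSHom A C),
      (∀ x z, h.m x z = ∑ y, f.m x y * g.m y z) → F A C h = F A B f + F B C g)
    (A B : FinPS) (f : FinPSHom A B) :
    F A B f = 0 := by
  have hzero : ∀ C : FinPS, F PtSpace C (fromPt C) = 0 := by
    intro C
    have hid : F PtSpace PtSpace idPt = 0 := by
      apply Fid
      intro x x'
      have hxx : x = x' := Subsingleton.elim (α := PUnit) x x'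
      simp [idPt, hxx]
    have hc : F PtSpace PtSpace idPt =
        F PtSpace C (fromPt C) + F C PtSpace (toPt C) := by
      apply Fcomp
      intro x z
      simp [idPt, fromPt, toPt, C.sum_one]
    have h1 := Fnonneg PtSpace C (fromPt C)
    have h2 := Fnonneg C PtSpace (toPt C)
    linarith [hc, hid]
  have hc : F PtSpace B (fromPt B) = F PtSpace A (fromPt A) + F A B f := by
    apply Fcomp
    intro x z
    simp only [fromPt]
    rw [← f.push z]
    exact Finset.sum_congr rfl fun y _ => mul_comm _ _
  rw [hzero A, hzero B, zero_add] at hc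
  exact hc.symm
end

section
/- Conditional information loss is convex linear: for a probability distribution p on a finite index set X and a family of measure-preserving stochastic maps Q^x : (Y_x, q^x) → (Y'_x, q'^x), the conditional information loss of the p-weighted convex sum ⊕_x p_x Q^x equals Σ_x p_x K(Q^x). -/
open Real BigOperators
open scoped Classical

lemma entropy_sigma {X : Type*} [Fintype X] {Z : X → Type*} [∀ x, Fintype (Z x)]
    (p : X → ℝ) (s : ∀ x, Z x → ℝ) (t : (Σ x, Z x) → ℝ)
    (hs : ∀ x, IsDist (s x)) (ht : ∀ x (z : Z x), t ⟨x, z⟩ = p x * s x z) :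
    entropy t = entropy p + ∑ x, p x * entropy (s x) := by
  unfold entropy
  rw [← Finset.univ_sigma_univ, Finset.sum_sigma, ← Finset.sum_add_distrib]
  refine Finset.sum_congr rfl fun x _ => ?_
  simp only [ht, Real.negMulLog_mul, Finset.sum_add_distrib, ← Finset.sum_mul,
    ← Finset.mul_sum, (hs x).2, one_mul]

theorem conditional_information_loss_convex_linear
    {X : Type*} [Fintype X] {Y Y' : X → Type*}
    [∀ x, Fintype (Y x)] [∀ x, Fintype (Y' x)]
    (p : X → ℝ) (q : ∀ x, Y x → ℝ) (q' : ∀ x, Y' x → ℝ)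
    (Q : ∀ x, Y x → Y' x → ℝ)
    (h : (Σ x, Y x) → (Σ x, Y' x) → ℝ)
    (r : (Σ x, Y x) → ℝ) (r' : (Σ x, Y' x) → ℝ)
    (hp : IsDist p) (hq : ∀ x, IsDist (q x)) (hq' : ∀ x, IsDist (q' x))
    (hQ : ∀ x z, IsDist (Q x z))
    (hpush : ∀ x z', q' x z' = ∑ z, Q x z z' * q x z)
    (hr : ∀ x (z : Y x), r ⟨x, z⟩ = p x * q x z)
    (hr' : ∀ x (z' : Y' x), r' ⟨x, z'⟩ = p x * q' x z')
    (hdiag : ∀ x (z : Y x) (z' : Y' x), h ⟨x, z⟩ ⟨x, z'⟩ = Q x z z')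
    (hoff : ∀ x x' (z : Y x) (z' : Y' x'), x ≠ x' → h ⟨x, z⟩ ⟨x', z'⟩ = 0) :
    entropy r - entropy r' + ∑ z, r z * entropy (h z) =
      ∑ x, p x * (entropy (q x) - entropy (q' x) + ∑ z, q x z * entropy (Q x z)) := by
  have h1 := entropy_sigma p q r hq hr
  have h2 := entropy_sigma p q' r' hq' hr'
  have h3 : ∑ z, r z * entropy (h z)
      = ∑ x, p x * ∑ z, q x z * entropy (Q x z) := by
    rw [← Finset.univ_sigma_univ, Finset.sum_sigma]
    refine Finset.sum_congr rfl fun x _ => ?_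
    rw [Finset.mul_sum]
    refine Finset.sum_congr rfl fun z _ => ?_
    rw [hr, mul_assoc]
    congr 1
    congr 1
    unfold entropy
    rw [← Finset.univ_sigma_univ, Finset.sum_sigma]
    rw [Finset.sum_eq_single x]
    · exact Finset.sum_congr rfl fun z' _ => by rw [hdiag]
    · intro x' _ hx'
      simp [hoff x x' z _ (Ne.symm hx')]
    · simp
  rw [h1, h2, h3]
  have hsum : ∑ x, p x * (entropy (q x) - entropy (q' x) + ∑ z, q x z * entropy (Q x z))
      = (∑ x, p x * entropy (q x)) - (∑ x, p x * entropy (q' x))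
        + ∑ x, p x * ∑ z, q x z * entropy (Q x z) := by
    rw [← Finset.sum_sub_distrib, ← Finset.sum_add_distrib]
    exact Finset.sum_congr rfl fun x _ => by ring
  rw [hsum]; ring
end

section
/- For a composable pair of stochastic maps (X,p) → (Y,q) → (Z,r) between finite probability spaces, the following are equivalent: (a) for every x with p_x > 0 and every z ∈ Z there is at most one y ∈ Y with g_{zy} f_{yx} ≠ 0; (b) there exists a function h : Z × X → Y with (g∘f)_{zx} = g_{z,h(z,x)} f_{h(z,x),x} for all z ∈ Z and all x with p_x > 0; (c) there exists a function h : Z × X → Y with [h(z,x) = y] · (g∘f)_{zx} · p_x = g_{zy} f_{yx} p_x for all (z,y,x). -/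
open Real BigOperators
open scoped Classical

lemma zero_of_sum_eq_apply {Y : Type*} [Fintype Y] {F : Y → ℝ} (hF : ∀ y, 0 ≤ F y)
    {y0 : Y} (h : ∑ y, F y = F y0) {y : Y} (hy : y ≠ y0) : F y = 0 := by
  have h1 : ∑ y ∈ Finset.univ.erase y0, F y = 0 := by
    have h2 := Finset.add_sum_erase Finset.univ F (Finset.mem_univ y0)
    linarith
  exact (Finset.sum_eq_zero_iff_of_nonneg (fun y _ => hF y)).mp h1 y
    (Finset.mem_erase.mpr ⟨hy, Finset.mem_univ y⟩)

theorem mediator_equivalence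
    {X Y Z : Type*} [Fintype X] [Fintype Y] [Fintype Z]
    (p : X → ℝ) (q : Y → ℝ) (r : Z → ℝ)
    (f : X → Y → ℝ) (g : Y → Z → ℝ)
    (hp : IsDist p) (hf : ∀ x, IsDist (f x)) (hg : ∀ y, IsDist (g y))
    (hq : ∀ y, q y = ∑ x, f x y * p x)
    (hr : ∀ z, r z = ∑ y, g y z * q y) :
    ((∀ x, 0 < p x → ∀ z, ∀ y y', g y z * f x y ≠ 0 → g y' z * f x y' ≠ 0 → y = y') ↔
      (∃ h : Z × X → Y, ∀ z x, 0 < p x →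
        (∑ y, g y z * f x y) = g (h (z, x)) z * f x (h (z, x)))) ∧
    ((∃ h : Z × X → Y, ∀ z x, 0 < p x →
        (∑ y, g y z * f x y) = g (h (z, x)) z * f x (h (z, x))) ↔
      (∃ h : Z × X → Y, ∀ z y x,
        (if h (z, x) = y then (1:ℝ) else 0) * (∑ y', g y' z * f x y') * p x =
          g y z * f x y * p x)) := by
  have hXne : Nonempty X := by
    by_contra hX
    rw [not_nonempty_iff] at hX
    have := hp.2
    simp [Finset.sum_eq_zero] at this
  have hYne : Nonempty Y := by
    by_contra hY
    rw [not_nonempty_iff] at hY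
    have := (hf (Classical.arbitrary X)).2
    simp [Finset.sum_eq_zero] at this
  have hterm : ∀ z x y, 0 ≤ g y z * f x y := fun z x y =>
    mul_nonneg ((hg y).1 z) ((hf x).1 y)
  constructor
  · constructor
    · intro ha
      refine ⟨fun zx => if hyp : ∃ y, g y zx.1 * f zx.2 y ≠ 0 then hyp.choose
        else Classical.arbitrary Y, ?_⟩
      intro z x hpx
      dsimp only
      split_ifs with hyp
      · have hne := hyp.choose_spec
        apply Finset.sum_eq_single_of_mem _ (Finset.mem_univ _)
        intro y _ hy
        by_contra hc
        exact hy (ha x hpx z y hyp.choose hc hne)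
      · push_neg at hyp
        rw [Finset.sum_eq_zero (fun y _ => hyp y)]
        exact (hyp _).symm
    · rintro ⟨h, hb⟩ x hpx z y y' hy hy'
      have key := hb z x hpx
      have h1 : y = h (z, x) := by
        by_contra hc
        exact hy (zero_of_sum_eq_apply (hterm z x) key hc)
      have h2 : y' = h (z, x) := by
        by_contra hc
        exact hy' (zero_of_sum_eq_apply (hterm z x) key hc)
      rw [h1, h2]
  · constructor
    · rintro ⟨h, hb⟩
      refine ⟨h, ?_⟩
      intro z y x
      rcases eq_or_lt_of_le (hp.1 x) with hpx | hpx
      · rw [← hpx]; ring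
      · have key := hb z x hpx
        by_cases hy : h (z, x) = y
        · subst hy
          rw [if_pos rfl, key]; ring
        · rw [if_neg hy]
          have : g y z * f x y = 0 :=
            zero_of_sum_eq_apply (hterm z x) key (fun hc => hy hc.symm)
          rw [this]; ring
    · rintro ⟨h, hc⟩
      refine ⟨h, ?_⟩
      intro z x hpx
      have key := hc z (h (z, x)) x
      rw [if_pos rfl, one_mul] at key
      exact mul_right_cancel₀ (ne_of_gt hpx) key
end

section
/- For composable stochastic maps (X,p) → (Y,q) → (Z,r) between finite probability spaces, conditional entropy is additive, i.e., H(g∘f|p) = H(f|p) + H(g|q), if and only if the pair (f,g) admits a mediator, i.e., a function h : Z × X → Y satisfying (g∘f)_{zx} = g_{z,h(z,x)} f_{h(z,x),x} for all z ∈ Z and all x with p_x > 0. -/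
open Real BigOperators
open scoped Classical

theorem condEntropy_additive_iff_mediator
    {X Y Z : Type*} [Fintype X] [Fintype Y] [Fintype Z]
    (p : X → ℝ) (q : Y → ℝ) (r : Z → ℝ)
    (f : X → Y → ℝ) (g : Y → Z → ℝ)
    (hp : IsDist p) (hf : ∀ x, IsDist (f x)) (hg : ∀ y, IsDist (g y))
    (hq : ∀ y, q y = ∑ x, f x y * p x)
    (hr : ∀ z, r z = ∑ y, g y z * q y) :
    (∑ x, p x * entropy (fun z => ∑ y, g y z * f x y)) =
      (∑ x, p x * entropy (f x)) + (∑ y, q y * entropy (g y)) ↔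
    (∃ h : Z × X → Y, ∀ z x, 0 < p x →
      (∑ y, g y z * f x y) = g (h (z, x)) z * f x (h (z, x))) := by
  by_cases hX : Nonempty X
  · -- main case
    have hY : Nonempty Y := by
      by_contra hY
      haveI : IsEmpty Y := not_nonempty_iff.mp hY
      obtain ⟨x⟩ := hX
      have := (hf x).2
      simp at this
    -- notation
    set S : X → Z → ℝ := fun x z => ∑ y, g y z * f x y with hS
    set term : X → Y → Z → ℝ := fun x y z =>
      p x * (f x y * g y z) *
        (Real.log (S x z) - Real.log (f x y) - Real.log (g y z)) with hterm
    -- single term bounded by S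
    have hle : ∀ x y z, g y z * f x y ≤ S x z := by
      intro x y z
      exact Finset.single_le_sum
        (fun y' _ => mul_nonneg ((hg y').1 z) ((hf x).1 y')) (Finset.mem_univ y)
    have hSnonneg : ∀ x z, 0 ≤ S x z :=
      fun x z => Finset.sum_nonneg fun y' _ => mul_nonneg ((hg y').1 z) ((hf x).1 y')
    -- nonnegativity of terms
    have hterm_nonneg : ∀ x y z, 0 ≤ term x y z := by
      intro x y z
      rcases (hp.1 x).eq_or_lt with h | hpx
      · simp [hterm, ← h]
      rcases ((hf x).1 y).eq_or_lt with h | hfx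
      · simp [hterm, ← h]
      rcases ((hg y).1 z).eq_or_lt with h | hgy
      · simp [hterm, ← h]
      have hfg : 0 < f x y * g y z := mul_pos hfx hgy
      have hSp : 0 < S x z := lt_of_lt_of_le (by linarith [mul_pos hgy hfx]) (hle x y z)
      have hlog : Real.log (f x y) + Real.log (g y z) ≤ Real.log (S x z) := by
        rw [← Real.log_mul (ne_of_gt hfx) (ne_of_gt hgy)]
        apply Real.log_le_log hfg
        calc f x y * g y z = g y z * f x y := by ring
        _ ≤ S x z := hle x y z
      have : 0 ≤ Real.log (S x z) - Real.log (f x y) - Real.log (g y z) := by linarith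
      exact mul_nonneg (mul_nonneg hpx.le hfg.le) this
    -- the pointwise property
    set P : Prop := ∀ x y z, 0 < p x → 0 < f x y → 0 < g y z → S x z = g y z * f x y with hP
    -- key: entropy difference equals minus sum of terms
    have hA : ∀ x, p x * entropy (fun z => S x z) =
        ∑ y, ∑ z, -(p x * (f x y * g y z) * Real.log (S x z)) := by
      intro x
      rw [Finset.sum_comm]
      simp only [entropy, Real.negMulLog, Finset.mul_sum]
      apply Finset.sum_congr rfl
      intro z _
      have : (∑ y, -(p x * (f x y * g y z) * Real.log (S x z)))
          = -((∑ y, g y z * f x y) * (p x * Real.log (S x z))) := by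
        rw [Finset.sum_neg_distrib, Finset.sum_mul]
        congr 1
        apply Finset.sum_congr rfl
        intro y _
        ring
      rw [this]
      simp only [hS]
      ring
    have hB : ∀ x, p x * entropy (f x) =
        ∑ y, ∑ z, -(p x * (f x y * g y z) * Real.log (f x y)) := by
      intro x
      simp only [entropy, Real.negMulLog, Finset.mul_sum]
      apply Finset.sum_congr rfl
      intro y _
      have : (∑ z, -(p x * (f x y * g y z) * Real.log (f x y)))
          = -((∑ z, g y z) * (p x * f x y * Real.log (f x y))) := by
        rw [Finset.sum_neg_distrib, Finset.sum_mul]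
        congr 1
        apply Finset.sum_congr rfl
        intro z _
        ring
      rw [this, (hg y).2]
      ring
    have hC : (∑ y, q y * entropy (g y)) =
        ∑ x, ∑ y, ∑ z, -(p x * (f x y * g y z) * Real.log (g y z)) := by
      rw [Finset.sum_comm]
      apply Finset.sum_congr rfl
      intro y _
      rw [Finset.sum_comm]
      simp only [entropy, Real.negMulLog, Finset.mul_sum]
      apply Finset.sum_congr rfl
      intro z _
      rw [hq y]
      have : (∑ x, -(p x * (f x y * g y z) * Real.log (g y z)))
          = -((∑ x, f x y * p x) * (g y z * Real.log (g y z))) := by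
        rw [Finset.sum_neg_distrib, Finset.sum_mul]
        congr 1
        apply Finset.sum_congr rfl
        intro x _
        ring
      rw [this]
      ring
    have key : (∑ x, p x * entropy (fun z => S x z)) =
        ((∑ x, p x * entropy (f x)) + (∑ y, q y * entropy (g y)))
          - ∑ x, ∑ y, ∑ z, term x y z := by
      rw [hC]
      rw [Finset.sum_congr rfl fun x _ => hA x, Finset.sum_congr rfl fun x _ => hB x]
      rw [← Finset.sum_add_distrib, ← Finset.sum_sub_distrib]
      apply Finset.sum_congr rfl
      intro x _
      rw [← Finset.sum_add_distrib, ← Finset.sum_sub_distrib]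
      apply Finset.sum_congr rfl
      intro y _
      rw [← Finset.sum_add_distrib, ← Finset.sum_sub_distrib]
      apply Finset.sum_congr rfl
      intro z _
      simp only [hterm]
      ring
    -- equality iff total sum of terms is zero
    have hTiff : ((∑ x, p x * entropy (fun z => S x z)) =
        (∑ x, p x * entropy (f x)) + (∑ y, q y * entropy (g y))) ↔
        (∑ x, ∑ y, ∑ z, term x y z) = 0 := by
      constructor
      · intro h; rw [key] at h; linarith
      · intro h; rw [key, h]; ring
    -- sum zero iff every term zero
    have hTzero_iff : (∑ x, ∑ y, ∑ z, term x y z) = 0 ↔ ∀ x y z, term x y z = 0 := by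
      constructor
      · intro h x y z
        have h1 := (Finset.sum_eq_zero_iff_of_nonneg
          (fun x _ => Finset.sum_nonneg fun y _ => Finset.sum_nonneg fun z _ =>
            hterm_nonneg x y z)).mp h x (Finset.mem_univ x)
        have h2 := (Finset.sum_eq_zero_iff_of_nonneg
          (fun y _ => Finset.sum_nonneg fun z _ => hterm_nonneg x y z)).mp h1 y (Finset.mem_univ y)
        exact (Finset.sum_eq_zero_iff_of_nonneg
          (fun z _ => hterm_nonneg x y z)).mp h2 z (Finset.mem_univ z)
      · intro h
        exact Finset.sum_eq_zero fun x _ => Finset.sum_eq_zero fun y _ =>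
          Finset.sum_eq_zero fun z _ => h x y z
    -- every term zero iff P
    have hPiff : (∀ x y z, term x y z = 0) ↔ P := by
      constructor
      · intro h x y z hpx hfx hgy
        have ht := h x y z
        have hfg : 0 < f x y * g y z := mul_pos hfx hgy
        have hne : p x * (f x y * g y z) ≠ 0 := ne_of_gt (mul_pos hpx hfg)
        have hlogeq : Real.log (S x z) - Real.log (f x y) - Real.log (g y z) = 0 := by
          rcases mul_eq_zero.mp ht with h' | h'
          · exact absurd h' hne
          · exact h'
        have hSp : 0 < S x z :=
          lt_of_lt_of_le (mul_pos hgy hfx) (hle x y z)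
        have : Real.log (S x z) = Real.log (g y z * f x y) := by
          rw [Real.log_mul (ne_of_gt hgy) (ne_of_gt hfx)]
          linarith
        have := Real.log_injOn_pos (Set.mem_Ioi.mpr hSp)
          (Set.mem_Ioi.mpr (mul_pos hgy hfx)) this
        exact this
      · intro h x y z
        rcases (hp.1 x).eq_or_lt with h' | hpx
        · simp [hterm, ← h']
        rcases ((hf x).1 y).eq_or_lt with h' | hfx
        · simp [hterm, ← h']
        rcases ((hg y).1 z).eq_or_lt with h' | hgy
        · simp [hterm, ← h']
        have hSval : S x z = g y z * f x y := h x y z hpx hfx hgy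
        simp only [hterm]
        rw [hSval, Real.log_mul (ne_of_gt hgy) (ne_of_gt hfx)]
        ring
    -- P iff mediator
    have hmed : P ↔ (∃ h : Z × X → Y, ∀ z x, 0 < p x →
        S x z = g (h (z, x)) z * f x (h (z, x))) := by
      constructor
      · intro hPP
        refine ⟨fun zx => if hyp : ∃ y, 0 < g y zx.1 * f zx.2 y then hyp.choose
          else Classical.arbitrary Y, ?_⟩
        intro z x hpx
        by_cases hyp : ∃ y, 0 < g y z * f x y
        · simp only [dif_pos hyp]
          obtain hy0 := hyp.choose_spec
          set y0 := hyp.choose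
          have hgy : 0 < g y0 z := by
            rcases ((hg y0).1 z).eq_or_lt with h' | h'
            · rw [← h'] at hy0; simp at hy0
            · exact h'
          have hfx : 0 < f x y0 := by
            rcases ((hf x).1 y0).eq_or_lt with h' | h'
            · rw [← h'] at hy0; simp at hy0
            · exact h'
          exact hPP x y0 z hpx hfx hgy
        · push_neg at hyp
          simp only [dif_neg (by push_neg; exact hyp : ¬∃ y, 0 < g y z * f x y)]
          have hall : ∀ y, g y z * f x y = 0 := fun y =>
            le_antisymm (hyp y) (mul_nonneg ((hg y).1 z) ((hf x).1 y))
          rw [show S x z = ∑ y, g y z * f x y from rfl, Finset.sum_eq_zero fun y _ => hall y,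
            hall (Classical.arbitrary Y)]
      · rintro ⟨h, hh⟩ x y z hpx hfx hgy
        have hSval := hh z x hpx
        set y0 := h (z, x)
        by_cases hyy : y = y0
        · rw [hSval, hyy]
        · exfalso
          have hpair : ({y, y0} : Finset Y) ⊆ Finset.univ := Finset.subset_univ _
          have hsum2 : g y z * f x y + g y0 z * f x y0 ≤ S x z := by
            have hp2 : (∑ y' ∈ ({y, y0} : Finset Y), g y' z * f x y') ≤
                ∑ y' : Y, g y' z * f x y' :=
              Finset.sum_le_sum_of_subset_of_nonneg hpair
                (fun y' _ _ => mul_nonneg ((hg y').1 z) ((hf x).1 y'))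
            rw [Finset.sum_pair hyy] at hp2
            exact hp2
          rw [hSval] at hsum2
          have : g y z * f x y ≤ 0 := by linarith
          exact absurd this (not_le.mpr (mul_pos hgy hfx))
    rw [hTiff, hTzero_iff, hPiff, hmed]
  · -- X empty
    haveI : IsEmpty X := not_nonempty_iff.mp hX
    constructor
    · intro _
      exact ⟨fun zx => (hX ⟨zx.2⟩).elim, fun z x => (hX ⟨x⟩).elim⟩
    · intro _
      have hq0 : ∀ y, q y = 0 := by intro y; rw [hq]; simp
      simp [hq0]
end

section
/- For composable stochastic maps (X,p) → (Y,q) → (Z,r) between finite probability spaces, the difference H((g×id_Y)∘Δ_Y∘f | p) − H(g∘f|p) is non-negative and equals −Σ_{x: p_x>0} Σ_{y: f_{yx}>0} Σ_{z: g_{zy}>0} p_x g_{zy} f_{yx} log( g_{zy} f_{yx} / Σ_{y'} g_{zy'} f_{y'x} ). -/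
open Real BigOperators
open scoped Classical

theorem condEntropy_deviation
    {X Y Z : Type*} [Fintype X] [Fintype Y] [Fintype Z]
    (p : X → ℝ) (q : Y → ℝ)
    (f : X → Y → ℝ) (g : Y → Z → ℝ)
    (hp : IsDist p) (hf : ∀ x, IsDist (f x)) (hg : ∀ y, IsDist (g y))
    (hq : ∀ y, q y = ∑ x, f x y * p x) :
    0 ≤ (∑ x, p x * entropy (fun zy : Z × Y => g zy.2 zy.1 * f x zy.2)) -
        (∑ x, p x * entropy (fun z => ∑ y, g y z * f x y)) ∧
    (∑ x, p x * entropy (fun zy : Z × Y => g zy.2 zy.1 * f x zy.2)) -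
        (∑ x, p x * entropy (fun z => ∑ y, g y z * f x y)) =
      -∑ x ∈ Finset.univ.filter (fun x => 0 < p x),
        ∑ y ∈ Finset.univ.filter (fun y => 0 < f x y),
          ∑ z ∈ Finset.univ.filter (fun z => 0 < g y z),
            p x * (g y z * f x y) *
              Real.log (g y z * f x y / ∑ y', g y' z * f x y') := by
  set t : X → Y → Z → ℝ := fun x y z =>
    p x * (g y z * f x y) * Real.log (g y z * f x y / ∑ y', g y' z * f x y') with ht
  have ha : ∀ x y z, 0 ≤ g y z * f x y := fun x y z =>
    mul_nonneg ((hg y).1 z) ((hf x).1 y)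
  have hr : ∀ x z, ∀ y, g y z * f x y ≤ ∑ y', g y' z * f x y' := by
    intro x z y
    exact Finset.single_le_sum (fun y' _ => ha x y' z) (Finset.mem_univ y)
  -- each term is nonpositive
  have hterm : ∀ x y z, t x y z ≤ 0 := by
    intro x y z
    rcases eq_or_lt_of_le (ha x y z) with h | h
    · simp [ht, ← h]
    · have hrpos : 0 < ∑ y', g y' z * f x y' := lt_of_lt_of_le h (hr x z y)
      have hlog : Real.log (g y z * f x y / ∑ y', g y' z * f x y') ≤ 0 := by
        apply Real.log_nonpos (by positivity)
        rw [div_le_one hrpos]; exact hr x z y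
      have hnn : 0 ≤ p x * (g y z * f x y) := mul_nonneg (hp.1 x) h.le
      exact mul_nonpos_of_nonneg_of_nonpos hnn hlog
  -- per-x identity
  have key : ∀ x,
      p x * entropy (fun zy : Z × Y => g zy.2 zy.1 * f x zy.2) -
        p x * entropy (fun z => ∑ y, g y z * f x y) =
      -∑ z, ∑ y, t x y z := by
    intro x
    rw [← mul_sub]
    unfold entropy
    rw [Fintype.sum_prod_type]
    have h2 : ∀ z, (∑ y, negMulLog (g y z * f x y)) - negMulLog (∑ y, g y z * f x y)
        = -∑ y, (g y z * f x y) * Real.log (g y z * f x y / ∑ y', g y' z * f x y') := by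
      intro z
      have hrm : negMulLog (∑ y, g y z * f x y)
          = ∑ y, -((g y z * f x y) * Real.log (∑ y', g y' z * f x y')) := by
        rw [negMulLog, neg_mul, Finset.sum_mul, ← Finset.sum_neg_distrib]
      rw [hrm, ← Finset.sum_sub_distrib, ← Finset.sum_neg_distrib]
      apply Finset.sum_congr rfl
      intro y _
      rcases eq_or_lt_of_le (ha x y z) with h | h
      · simp [negMulLog, ← h]
      · have hrpos : 0 < ∑ y', g y' z * f x y' := lt_of_lt_of_le h (hr x z y)
        rw [Real.log_div h.ne' hrpos.ne', negMulLog]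
        ring
    rw [← Finset.sum_sub_distrib, Finset.mul_sum, ← Finset.sum_neg_distrib]
    apply Finset.sum_congr rfl
    intro z _
    rw [h2 z, mul_neg, neg_inj, Finset.mul_sum]
    apply Finset.sum_congr rfl
    intro y _
    simp only [ht]
    ring
  -- total difference equals minus the full triple sum
  have hdiff : (∑ x, p x * entropy (fun zy : Z × Y => g zy.2 zy.1 * f x zy.2)) -
      (∑ x, p x * entropy (fun z => ∑ y, g y z * f x y)) =
      -∑ x, ∑ y, ∑ z, t x y z := by
    rw [← Finset.sum_sub_distrib]
    have : ∑ x, (p x * entropy (fun zy : Z × Y => g zy.2 zy.1 * f x zy.2) -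
        p x * entropy (fun z => ∑ y, g y z * f x y)) = ∑ x, -∑ z, ∑ y, t x y z :=
      Finset.sum_congr rfl fun x _ => key x
    rw [this, Finset.sum_neg_distrib, neg_inj]
    exact Finset.sum_congr rfl fun x _ => Finset.sum_comm
  -- full triple sum equals filtered triple sum
  have hfilt : ∑ x, ∑ y, ∑ z, t x y z =
      ∑ x ∈ Finset.univ.filter (fun x => 0 < p x),
        ∑ y ∈ Finset.univ.filter (fun y => 0 < f x y),
          ∑ z ∈ Finset.univ.filter (fun z => 0 < g y z), t x y z := by
    symm
    have hz : ∀ x y, ∑ z ∈ Finset.univ.filter (fun z => 0 < g y z), t x y z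
        = ∑ z, t x y z := by
      intro x y
      apply Finset.sum_filter_of_ne
      intro z _ hne
      rcases lt_or_eq_of_le ((hg y).1 z) with h | h
      · exact h
      · exfalso; apply hne; simp [ht, ← h]
    have hy : ∀ x, ∑ y ∈ Finset.univ.filter (fun y => 0 < f x y),
        ∑ z, t x y z = ∑ y, ∑ z, t x y z := by
      intro x
      apply Finset.sum_filter_of_ne
      intro y _ hne
      rcases lt_or_eq_of_le ((hf x).1 y) with h | h
      · exact h
      · exfalso; apply hne
        apply Finset.sum_eq_zero
        intro z _; simp [ht, ← h]
    calc ∑ x ∈ Finset.univ.filter (fun x => 0 < p x),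
          ∑ y ∈ Finset.univ.filter (fun y => 0 < f x y),
            ∑ z ∈ Finset.univ.filter (fun z => 0 < g y z), t x y z
        = ∑ x ∈ Finset.univ.filter (fun x => 0 < p x), ∑ y, ∑ z, t x y z := by
          apply Finset.sum_congr rfl
          intro x _
          rw [← hy x]
          exact Finset.sum_congr rfl fun y _ => hz x y
      _ = ∑ x, ∑ y, ∑ z, t x y z := by
          apply Finset.sum_filter_of_ne
          intro x _ hne
          rcases lt_or_eq_of_le (hp.1 x) with h | h
          · exact h
          · exfalso; apply hne
            apply Finset.sum_eq_zero; intro y _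
            apply Finset.sum_eq_zero; intro z _
            simp [ht, ← h]
  constructor
  · rw [hdiff, neg_nonneg]
    apply Finset.sum_nonpos; intro x _
    apply Finset.sum_nonpos; intro y _
    apply Finset.sum_nonpos; intro z _
    exact hterm x y z
  · rw [hdiff, hfilt]
end

section
/- If f : (X,p) → (Y,q) is p-almost-everywhere deterministic (i.e., f_{yx} = δ_{y,φ(x)} for some function φ whenever p_x > 0), then for any composable stochastic map g : (Y,q) → (Z,r), conditional entropy is additive: H(g∘f|p) = H(f|p) + H(g|q). -/
open Real BigOperators
open scoped Classical

theorem ae_deterministic_condEntropy_additive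
    {X Y Z : Type*} [Fintype X] [Fintype Y] [Fintype Z]
    (p : X → ℝ) (q : Y → ℝ)
    (f : X → Y → ℝ) (g : Y → Z → ℝ) (φ : X → Y)
    (hp : IsDist p) (hf : ∀ x, IsDist (f x)) (hg : ∀ y, IsDist (g y))
    (hq : ∀ y, q y = ∑ x, f x y * p x)
    (hdet : ∀ x, 0 < p x → ∀ y, f x y = if y = φ x then 1 else 0) :
    (∑ x, p x * entropy (fun z => ∑ y, g y z * f x y)) =
      (∑ x, p x * entropy (f x)) + (∑ y, q y * entropy (g y)) := by
  have hre : (∑ y, q y * entropy (g y)) = ∑ x, p x * ∑ y, f x y * entropy (g y) := by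
    simp only [hq, Finset.sum_mul]
    rw [Finset.sum_comm]
    refine Finset.sum_congr rfl fun x _ => ?_
    rw [Finset.mul_sum]
    exact Finset.sum_congr rfl fun y _ => by ring
  rw [hre, ← Finset.sum_add_distrib]
  refine Finset.sum_congr rfl fun x _ => ?_
  rcases eq_or_lt_of_le ((hp.1) x) with h0 | hpos
  · simp [← h0]
  · have hfx := hdet x hpos
    have h1 : entropy (f x) = 0 := by
      simp [entropy, hfx, apply_ite Real.negMulLog]
    have h2 : (fun z => ∑ y, g y z * f x y) = g (φ x) := by
      funext z
      simp [hfx]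
    have h3 : (∑ y, f x y * entropy (g y)) = entropy (g (φ x)) := by
      simp [hfx]
    rw [h1, h2, h3]; ring
end

section
/- If f̄ is a Bayesian inverse of the measure-preserving stochastic map f : (X,p) → (Y,q) and ḡ is a Bayesian inverse of g : (Y,q) → (Z,r), then f̄ ∘ ḡ is a Bayesian inverse of g ∘ f : (X,p) → (Z,r). -/
open Real BigOperators
open scoped Classical

theorem bayesian_inverse_comp
    {X Y Z : Type*} [Fintype X] [Fintype Y] [Fintype Z]
    (p : X → ℝ) (q : Y → ℝ) (r : Z → ℝ)
    (f : X → Y → ℝ) (g : Y → Z → ℝ)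
    (fb : Y → X → ℝ) (gb : Z → Y → ℝ)
    (hp : IsDist p) (hf : ∀ x, IsDist (f x)) (hg : ∀ y, IsDist (g y))
    (hq : ∀ y, q y = ∑ x, f x y * p x)
    (hr : ∀ z, r z = ∑ y, g y z * q y)
    (hfb : ∀ y, IsDist (fb y)) (hgb : ∀ z, IsDist (gb z))
    (hfbBayes : ∀ x y, fb y x * q y = f x y * p x)
    (hgbBayes : ∀ y z, gb z y * r z = g y z * q y) :
    (∀ z, IsDist (fun x => ∑ y, fb y x * gb z y)) ∧
    (∀ x z, (∑ y, fb y x * gb z y) * r z = (∑ y, g y z * f x y) * p x) := by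
  constructor
  · intro z
    constructor
    · intro x
      exact Finset.sum_nonneg fun y _ => mul_nonneg ((hfb y).1 x) ((hgb z).1 y)
    · rw [Finset.sum_comm]
      calc ∑ y, ∑ x, fb y x * gb z y
          = ∑ y, gb z y * ∑ x, fb y x := by
            simp [Finset.mul_sum, mul_comm]
        _ = 1 := by simp [(hfb _).2, (hgb z).2]
  · intro x z
    calc (∑ y, fb y x * gb z y) * r z
        = ∑ y, fb y x * (gb z y * r z) := by rw [Finset.sum_mul]; simp [mul_assoc]
      _ = ∑ y, g y z * (fb y x * q y) := by
          simp only [hgbBayes]; apply Finset.sum_congr rfl; intros; ring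
      _ = ∑ y, g y z * (f x y * p x) := by simp only [hfbBayes]
      _ = (∑ y, g y z * f x y) * p x := by rw [Finset.sum_mul]; ring_nf; exact Finset.sum_congr rfl fun _ _ => by ring
end

section
/- If f̄ is a Bayesian inverse of the measure-preserving stochastic map f : (X,p) → (Y,q), then the conditional information loss of f̄ equals the conditional entropy of f: K(f̄) = H(f|p), and likewise K(f) = H(f̄|q). -/
open Real BigOperators
open scoped Classical

lemma chain_aux {X : Type*} [Fintype X] (b : X → ℝ) (c : ℝ) (hb : ∑ x, b x = 1) :
    ∑ x, Real.negMulLog (b x * c) = c * entropy b + Real.negMulLog c := by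
  simp only [Real.negMulLog_mul, Finset.sum_add_distrib, ← Finset.sum_mul,
    ← Finset.mul_sum, hb, entropy]
  ring

theorem K_of_bayesian_inverse
    {X Y : Type*} [Fintype X] [Fintype Y]
    (p : X → ℝ) (f : X → Y → ℝ) (q : Y → ℝ) (fb : Y → X → ℝ)
    (hp : IsDist p) (hf : ∀ x, IsDist (f x))
    (hq : ∀ y, q y = ∑ x, f x y * p x)
    (hfb : ∀ y, IsDist (fb y))
    (hpush : ∀ x, p x = ∑ y, fb y x * q y)
    (hfbBayes : ∀ x y, fb y x * q y = f x y * p x) :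
    (entropy q - entropy p + ∑ y, q y * entropy (fb y) = ∑ x, p x * entropy (f x)) ∧
    (entropy p - entropy q + ∑ x, p x * entropy (f x) = ∑ y, q y * entropy (fb y)) := by
  have key : entropy q + ∑ y, q y * entropy (fb y)
      = entropy p + ∑ x, p x * entropy (f x) := by
    have h1 : ∑ y, ∑ x, Real.negMulLog (fb y x * q y)
        = ∑ y, (q y * entropy (fb y) + Real.negMulLog (q y)) := by
      refine Finset.sum_congr rfl fun y _ => chain_aux _ _ (hfb y).2
    have h2 : ∑ x, ∑ y, Real.negMulLog (f x y * p x)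
        = ∑ x, (p x * entropy (f x) + Real.negMulLog (p x)) := by
      refine Finset.sum_congr rfl fun x _ => chain_aux _ _ (hf x).2
    have h3 : ∑ y, ∑ x, Real.negMulLog (fb y x * q y)
        = ∑ x, ∑ y, Real.negMulLog (f x y * p x) := by
      rw [Finset.sum_comm]
      exact Finset.sum_congr rfl fun x _ => Finset.sum_congr rfl fun y _ => by
        rw [hfbBayes]
    rw [h1, h2] at h3
    simp only [Finset.sum_add_distrib] at h3
    simp only [entropy] at h3 ⊢
    linarith
  constructor <;> linarith
end

section
/- If composable stochastic maps (X,p) → (Y,q) → (Z,r) admit a mediator h : Z×X → Y (so that h∘γ realizes a.e. coalescability), and f̄, ḡ are Bayesian inverses of f, g respectively, then the pair (ḡ, f̄) : (Z,r) → (Y,q) → (X,p) admits the mediator h∘γ : X×Z → Y, where γ is the swap; i.e., f̄_{xy} ḡ_{yz} r_z = [h(z,x)=y] · (f̄∘ḡ)_{xz} · r_z for all x,y,z. -/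
open Real BigOperators
open scoped Classical

theorem bayesian_inverses_coalescable
    {X Y Z : Type*} [Fintype X] [Fintype Y] [Fintype Z]
    (p : X → ℝ) (q : Y → ℝ) (r : Z → ℝ)
    (f : X → Y → ℝ) (g : Y → Z → ℝ)
    (fb : Y → X → ℝ) (gb : Z → Y → ℝ)
    (h : Z × X → Y)
    (hp : IsDist p) (hf : ∀ x, IsDist (f x)) (hg : ∀ y, IsDist (g y))
    (hq : ∀ y, q y = ∑ x, f x y * p x)
    (hr : ∀ z, r z = ∑ y, g y z * q y)
    (hfb : ∀ y, IsDist (fb y)) (hgb : ∀ z, IsDist (gb z))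
    (hfbBayes : ∀ x y, fb y x * q y = f x y * p x)
    (hgbBayes : ∀ y z, gb z y * r z = g y z * q y)
    (hmed : ∀ z y x,
      (if h (z, x) = y then (1:ℝ) else 0) * (∑ y', g y' z * f x y') * p x =
        g y z * f x y * p x) :
    ∀ x y z, fb y x * gb z y * r z =
      (if h (z, x) = y then (1:ℝ) else 0) * (∑ y', fb y' x * gb z y') * r z := by
  intro x y z
  have key : ∀ y', fb y' x * gb z y' * r z = g y' z * f x y' * p x := by
    intro y'
    calc fb y' x * gb z y' * r z = fb y' x * (gb z y' * r z) := by ring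
    _ = fb y' x * (g y' z * q y') := by rw [hgbBayes]
    _ = g y' z * (fb y' x * q y') := by ring
    _ = g y' z * (f x y' * p x) := by rw [hfbBayes]
    _ = g y' z * f x y' * p x := by ring
  calc fb y x * gb z y * r z = g y z * f x y * p x := key y
  _ = (if h (z, x) = y then (1:ℝ) else 0) * (∑ y', g y' z * f x y') * p x :=
      (hmed z y x).symm
  _ = (if h (z, x) = y then (1:ℝ) else 0) * (∑ y', g y' z * f x y' * p x) := by
      rw [mul_assoc, Finset.sum_mul]
  _ = (if h (z, x) = y then (1:ℝ) else 0) * (∑ y', fb y' x * gb z y' * r z) := by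
      simp_rw [key]
  _ = (if h (z, x) = y then (1:ℝ) else 0) * (∑ y', fb y' x * gb z y') * r z := by
      rw [mul_assoc, Finset.sum_mul]
end

section
/- For a measure-preserving stochastic map f : (X,p) → (Y,q) between finite probability spaces, the conditional information loss K(f) vanishes if and only if there exists a measure-preserving stochastic map g : (Y,q) → (X,p) such that (g∘f)_{x'x} = δ_{x'x} for all x with p_x > 0 (i.e., f is a disintegration of g). -/
open Real BigOperators
open scoped Classical

section aux
variable {X Y : Type*} [Fintype X] [Fintype Y]

lemma term_nonneg (a S : ℝ) (ha : 0 ≤ a) (haS : a ≤ S) :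
    0 ≤ a * (Real.log S - Real.log a) := by
  rcases eq_or_lt_of_le ha with h | h
  · simp [← h]
  · exact mul_nonneg ha (sub_nonneg.2 (Real.log_le_log h haS))

lemma key_decomp (a : X → ℝ) (ha : ∀ x, 0 ≤ a x) :
    ∑ x, Real.negMulLog (a x) - Real.negMulLog (∑ x, a x)
      = ∑ x, a x * (Real.log (∑ x, a x) - Real.log (a x)) := by
  have : Real.negMulLog (∑ x, a x) = ∑ x, a x * (- Real.log (∑ x, a x)) := by
    rw [← Finset.sum_mul]; simp only [Real.negMulLog]; ring
  rw [this, ← Finset.sum_sub_distrib]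
  apply Finset.sum_congr rfl
  intro x _
  simp only [Real.negMulLog]; ring

lemma sum_term_eq_zero_iff (a : X → ℝ) (ha : ∀ x, 0 ≤ a x) :
    (∑ x, Real.negMulLog (a x) = Real.negMulLog (∑ x, a x)) ↔
      ∀ x, a x = 0 ∨ a x = ∑ x', a x' := by
  have hle : ∀ x, a x ≤ ∑ x', a x' := fun x =>
    Finset.single_le_sum (fun i _ => ha i) (Finset.mem_univ x)
  rw [← sub_eq_zero, key_decomp a ha]
  rw [Finset.sum_eq_zero_iff_of_nonneg (fun x _ => term_nonneg _ _ (ha x) (hle x))]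
  constructor
  · intro h x
    have := h x (Finset.mem_univ x)
    rcases mul_eq_zero.1 this with h1 | h1
    · exact Or.inl h1
    · rcases eq_or_lt_of_le (ha x) with h2 | h2
      · exact Or.inl h2.symm
      · right
        have hlog : Real.log (∑ x', a x') = Real.log (a x) := by linarith [sub_eq_zero.1 h1]
        exact (Real.log_injOn_pos (Set.mem_Ioi.2 h2) (Set.mem_Ioi.2 (lt_of_lt_of_le h2 (hle x))) hlog.symm)
  · intro h x _
    rcases h x with h1 | h1
    · simp [h1]
    · simp [h1]
end aux

theorem K_zero_iff_disintegration
    {X Y : Type*} [Fintype X] [Fintype Y]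
    (p : X → ℝ) (f : X → Y → ℝ) (q : Y → ℝ)
    (hp : IsDist p) (hf : ∀ x, IsDist (f x))
    (hq : ∀ y, q y = ∑ x, f x y * p x) :
    entropy p - entropy q + (∑ x, p x * entropy (f x)) = 0 ↔
    ∃ g : Y → X → ℝ, (∀ y, IsDist (g y)) ∧
      (∀ x', p x' = ∑ y, g y x' * q y) ∧
      (∀ x x', 0 < p x →
        (∑ y, g y x' * f x y) = if x' = x then (1:ℝ) else 0) := by
  obtain ⟨hp0, hp1⟩ := hp
  -- joint distribution a y x = f x y * p x ; q y = ∑ x, a y x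
  set a : Y → X → ℝ := fun y x => f x y * p x with ha_def
  have ha0 : ∀ y x, 0 ≤ a y x := fun y x => mul_nonneg ((hf x).1 y) (hp0 x)
  have haq : ∀ y x, a y x ≤ q y := by
    intro y x
    rw [hq y]
    exact Finset.single_le_sum (fun i _ => ha0 y i) (Finset.mem_univ x)
  -- rewrite K
  have hK : entropy p - entropy q + (∑ x, p x * entropy (f x))
      = ∑ y, (∑ x, Real.negMulLog (a y x) - Real.negMulLog (q y)) := by
    have h1 : entropy p + (∑ x, p x * entropy (f x)) = ∑ y, ∑ x, Real.negMulLog (a y x) := by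
      rw [Finset.sum_comm]
      unfold entropy
      rw [← Finset.sum_add_distrib]
      apply Finset.sum_congr rfl
      intro x _
      have : ∀ y, Real.negMulLog (a y x) = p x * Real.negMulLog (f x y) + f x y * Real.negMulLog (p x) := by
        intro y
        rw [ha_def]
        simp only
        rw [Real.negMulLog_mul]
      simp_rw [this]
      rw [Finset.sum_add_distrib, ← Finset.mul_sum, ← Finset.sum_mul, (hf x).2]
      ring
    have h2 : entropy q = ∑ y, Real.negMulLog (q y) := rfl
    rw [h2, Finset.sum_sub_distrib, ← h1]
    ring
  -- condition C
  have hCiff : (entropy p - entropy q + (∑ x, p x * entropy (f x)) = 0)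
      ↔ ∀ y x, a y x = 0 ∨ a y x = q y := by
    rw [hK]
    rw [Finset.sum_eq_zero_iff_of_nonneg]
    · constructor
      · intro h y x
        have := h y (Finset.mem_univ y)
        have hqy : q y = ∑ x, a y x := hq y
        rw [hqy]
        have := (sum_term_eq_zero_iff (a y) (ha0 y)).1 (by rw [← hqy]; linarith)
        exact this x
      · intro h y _
        have hqy : q y = ∑ x, a y x := hq y
        have := (sum_term_eq_zero_iff (a y) (ha0 y)).2 (fun x => by rw [← hqy]; exact h y x)
        rw [hqy]; linarith
    · intro y _
      have hqy : q y = ∑ x, a y x := hq y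
      rw [hqy, sub_nonneg]
      have := key_decomp (a y) (ha0 y)
      have hterm : 0 ≤ ∑ x, a y x * (Real.log (∑ x', a y x') - Real.log (a y x)) :=
        Finset.sum_nonneg (fun x _ => term_nonneg _ _ (ha0 y x)
          (Finset.single_le_sum (fun i _ => ha0 y i) (Finset.mem_univ x)))
      linarith
  rw [hCiff]
  constructor
  · -- forward: construct g
    intro hC
    have hXne : Nonempty X := by
      by_contra h
      rw [not_nonempty_iff] at h
      rw [Finset.sum_eq_zero (fun x _ => (h.false x).elim)] at hp1
      exact one_ne_zero hp1.symm
    obtain ⟨x₀⟩ := hXne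
    refine ⟨fun y x => if 0 < q y then a y x / q y else (if x = x₀ then 1 else 0), ?_, ?_, ?_⟩
    · intro y
      by_cases hy : 0 < q y
      · constructor
        · intro x; simp only [hy, if_true]
          exact div_nonneg (ha0 y x) hy.le
        · simp only [hy, if_true]
          rw [← Finset.sum_div, ← hq y, div_self hy.ne']
      · constructor
        · intro x; simp only [hy, if_false]; split <;> norm_num
        · simp only [hy, if_false]
          simp [Finset.sum_ite_eq']
    · intro x'
      have : ∀ y, (if 0 < q y then a y x' / q y else (if x' = x₀ then 1 else 0)) * q y = a y x' := by
        intro y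
        by_cases hy : 0 < q y
        · simp only [hy, if_true]; field_simp
        · have hq0 : q y = 0 := le_antisymm (not_lt.1 hy)
            (by rw [hq y]; exact Finset.sum_nonneg (fun i _ => ha0 y i))
          have ha0' : a y x' = 0 := le_antisymm (hq0 ▸ haq y x') (ha0 y x')
          simp [hq0, ha0']
      simp_rw [this]
      rw [ha_def]
      simp only
      rw [← Finset.sum_mul]
      rw [(hf x').2, one_mul]
    · intro x x' hpx
      have hsum : ∀ y, (if 0 < q y then a y x' / q y else (if x' = x₀ then 1 else 0)) * f x y
          = (if x' = x then (1:ℝ) else 0) * f x y := by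
        intro y
        by_cases hfy : f x y = 0
        · simp [hfy]
        have hfy' : 0 < f x y := lt_of_le_of_ne ((hf x).1 y) (Ne.symm hfy)
        have hay : 0 < a y x := mul_pos hfy' hpx
        have hqy : 0 < q y := lt_of_lt_of_le hay (haq y x)
        simp only [hqy, if_true]
        rcases hC y x with h1 | h1
        · exact absurd h1 hay.ne'
        by_cases hx' : x' = x
        · subst hx'
          rw [h1, div_self hqy.ne']
          simp
        · -- a y x' = 0
          have : a y x' = 0 := by
            have hq2 : q y = ∑ z, a y z := hq y
            have : a y x + a y x' ≤ q y := by
              rw [hq2]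
              have := Finset.add_sum_erase Finset.univ (a y) (Finset.mem_univ x)
              calc a y x + a y x' ≤ a y x + ∑ z ∈ Finset.univ.erase x, a y z := by
                    apply add_le_add_right
                    exact Finset.single_le_sum (fun i _ => ha0 y i)
                      (Finset.mem_erase.2 ⟨hx', Finset.mem_univ x'⟩)
                _ = ∑ z, a y z := this
            nlinarith [ha0 y x', h1]
          rw [this]
          simp [hx']
      simp_rw [hsum]
      rw [← Finset.mul_sum, (hf x).2, mul_one]
  · -- backward: from g derive C
    intro ⟨g, hg, hgp, hgf⟩ y x
    by_cases hax : a y x = 0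
    · exact Or.inl hax
    right
    have hpx : 0 < p x := by
      rcases lt_or_eq_of_le (hp0 x) with h | h
      · exact h
      · exact absurd (by simp [ha_def, ← h]) hax
    have hfxy : 0 < f x y := by
      rcases lt_or_eq_of_le ((hf x).1 y) with h | h
      · exact h
      · exact absurd (by simp [ha_def, ← h]) hax
    -- g y x = 1
    have hgyx1 : g y x = 1 := by
      have h1 : ∑ y', g y' x * f x y' = 1 := by
        have := hgf x x hpx; simpa using this
      have h2 : ∑ y', (1 - g y' x) * f x y' = 0 := by
        have : ∑ y', (1 - g y' x) * f x y' = ∑ y', f x y' - ∑ y', g y' x * f x y' := by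
          rw [← Finset.sum_sub_distrib]; apply Finset.sum_congr rfl; intro y' _; ring
        rw [this, (hf x).2, h1]; ring
      have h3 : ∀ y', (1 - g y' x) * f x y' = 0 := by
        intro y'
        have hnn : ∀ y' ∈ Finset.univ, 0 ≤ (1 - g y' x) * f x y' := by
          intro y' _
          apply mul_nonneg _ ((hf x).1 y')
          have : g y' x ≤ 1 := by
            have := (hg y').2
            have := Finset.single_le_sum (fun i _ => (hg y').1 i) (Finset.mem_univ x)
            linarith
          linarith
        exact (Finset.sum_eq_zero_iff_of_nonneg hnn).1 h2 y' (Finset.mem_univ y')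
      have := h3 y
      rcases mul_eq_zero.1 this with h | h
      · linarith
      · exact absurd h hfxy.ne'
    -- other x': a y x' = 0
    have hother : ∀ x', x' ≠ x → a y x' = 0 := by
      intro x' hx'
      by_contra hax'
      have hpx' : 0 < p x' := by
        rcases lt_or_eq_of_le (hp0 x') with h | h
        · exact h
        · exact absurd (by simp [ha_def, ← h]) hax'
      have hfx'y : 0 < f x' y := by
        rcases lt_or_eq_of_le ((hf x').1 y) with h | h
        · exact h
        · exact absurd (by simp [ha_def, ← h]) hax'
      -- similarly g y x' = 1
      have hgyx'1 : g y x' = 1 := by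
        have h1 : ∑ y', g y' x' * f x' y' = 1 := by
          have := hgf x' x' hpx'; simpa using this
        have h2 : ∑ y', (1 - g y' x') * f x' y' = 0 := by
          have : ∑ y', (1 - g y' x') * f x' y' = ∑ y', f x' y' - ∑ y', g y' x' * f x' y' := by
            rw [← Finset.sum_sub_distrib]; apply Finset.sum_congr rfl; intro y' _; ring
          rw [this, (hf x').2, h1]; ring
        have h3 : ∀ y', (1 - g y' x') * f x' y' = 0 := by
          intro y'
          have hnn : ∀ y' ∈ Finset.univ, 0 ≤ (1 - g y' x') * f x' y' := by
            intro y' _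
            apply mul_nonneg _ ((hf x').1 y')
            have : g y' x' ≤ 1 := by
              have := (hg y').2
              have := Finset.single_le_sum (fun i _ => (hg y').1 i) (Finset.mem_univ x')
              linarith
            linarith
          exact (Finset.sum_eq_zero_iff_of_nonneg hnn).1 h2 y' (Finset.mem_univ y')
        have := h3 y
        rcases mul_eq_zero.1 this with h | h
        · linarith
        · exact absurd h hfx'y.ne'
      -- but sum of g y over x ≤ 1 with two 1's: contradiction
      have hsum1 : (1:ℝ) = ∑ z, g y z := ((hg y).2).symm
      have : g y x + g y x' ≤ ∑ z, g y z := by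
        have := Finset.add_sum_erase Finset.univ (g y) (Finset.mem_univ x)
        calc g y x + g y x' ≤ g y x + ∑ z ∈ Finset.univ.erase x, g y z := by
              apply add_le_add_right
              exact Finset.single_le_sum (fun i _ => (hg y).1 i)
                (Finset.mem_erase.2 ⟨hx', Finset.mem_univ x'⟩)
          _ = ∑ z, g y z := this
      rw [hgyx1, hgyx'1, ← hsum1] at this
      linarith
    -- conclude a y x = q y
    rw [hq y]
    exact (Finset.sum_eq_single x (fun x' _ hx' => hother x' hx')
      (fun h => absurd (Finset.mem_univ x) h)).symm
end
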